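/- arXiv:1904.09396 — 2 statements merged into one kernel-verified Lean document; each statement's English description precedes it below -/
import Mathlib

section
/- Fix integers n, m ≥ 1, T ≥ 1, T₀ ≥ 0, indices i, j ∈ {1,…,n}, matrices A ∈ ℝ^{n×n}, B ∈ ℝ^{n×m}, K₀ ∈ ℝ^{m×n}, and constants η > 0, C ≥ 1, 0 ≤ ρ < 1 such that |||(A+BK₀)^τ||| ≤ Cρ^τ and |||(A+BK₀)^τB||| ≤ Cρ^τ for all integers τ ≥ 0 (spectral norm). Define the symmetric matrix R_G ∈ ℝ^{(n+m)(T+T₀+1)×(n+m)(T+T₀+1)} in block form as R_G = [[ η²·R̃₁(τ ↦ [(A+BK₀)^τ]_{i→j}), (η²/2)·R₁(τ ↦ [(A+BK₀)^τB]_{i→j}) ], [ (η²/2)·R₁(τ ↦ [(A+BK₀)^τB]_{i→j})ᵀ, 0 ]]. Then every eigenvalue λ of R_G satisfies |λ| ≤ (3/2)·Cη²/(1−ρ), and the sum of the squares of the eigenvalues of R_G satisfies Σ_k λ_k² ≤ (9/2)·C²η⁴·T/(1−ρ)². -/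
open Matrix

noncomputable section

/-- The spectral norm (induced 2-norm) of a real matrix. -/
def specNorm {α β : Type*} [Fintype α] [Fintype β] [DecidableEq β]
    (M : Matrix α β ℝ) : ℝ :=
  ‖LinearMap.toContinuousLinearMap (Matrix.toEuclideanLin M)‖

/-- The block-Toeplitz matrix `R₁(X)`: the `(r,s)` block equals `X(r-1-s)` when
`r ≥ T₀+1` and `s ≤ r-1`, and is zero otherwise. -/
def R1 {p q : ℕ} (T T₀ : ℕ) (f : ℕ → Matrix (Fin p) (Fin q) ℝ) :
    Matrix (Fin (T + T₀ + 1) × Fin p) (Fin (T + T₀ + 1) × Fin q) ℝ :=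
  Matrix.of fun rp sq =>
    if T₀ + 1 ≤ (rp.1 : ℕ) ∧ (sq.1 : ℕ) < (rp.1 : ℕ)
    then f ((rp.1 : ℕ) - 1 - (sq.1 : ℕ)) rp.2 sq.2 else 0

/-- The symmetrization `R̃₁(X) = (R₁(X) + R₁(X)ᵀ)/2`. -/
def R1sym {p : ℕ} (T T₀ : ℕ) (f : ℕ → Matrix (Fin p) (Fin p) ℝ) :
    Matrix (Fin (T + T₀ + 1) × Fin p) (Fin (T + T₀ + 1) × Fin p) ℝ :=
  (2 : ℝ)⁻¹ • (R1 T T₀ f + (R1 T T₀ f)ᵀ)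

/-- `[N]_{i→j}`: the matrix with `n` rows all zero except the `j`-th row, which is the
`i`-th row of `N`. -/
def rowEmbed {a q : ℕ} (n : ℕ) (N : Matrix (Fin a) (Fin q) ℝ) (i : Fin a) (j : Fin n) :
    Matrix (Fin n) (Fin q) ℝ :=
  Matrix.of fun r c => if r = j then N i c else 0

end

section Foundation
variable {α β : Type*} [Fintype α] [Fintype β] [DecidableEq β]

omit [DecidableEq β] in
lemma euclid_norm_symm (x : β → ℝ) :
    ‖(WithLp.equiv 2 (β → ℝ)).symm x‖ = Real.sqrt (∑ b, x b ^ 2) := by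
  rw [EuclideanSpace.norm_eq]
  congr 1
  refine Finset.sum_congr rfl fun b _ => ?_
  simp [Real.norm_eq_abs, sq_abs]

lemma specNorm_nonneg (M : Matrix α β ℝ) : 0 ≤ specNorm M := norm_nonneg _

lemma mulVec_sqrt_le (M : Matrix α β ℝ) (x : β → ℝ) :
    Real.sqrt (∑ a, (M *ᵥ x) a ^ 2) ≤ specNorm M * Real.sqrt (∑ b, x b ^ 2) := by
  have h := (LinearMap.toContinuousLinearMap (Matrix.toEuclideanLin M)).le_opNorm
    ((WithLp.equiv 2 (β → ℝ)).symm x)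
  simp only [LinearMap.coe_toContinuousLinearMap'] at h
  rw [show Matrix.toEuclideanLin M ((WithLp.equiv 2 (β → ℝ)).symm x) = (WithLp.equiv 2 (α → ℝ)).symm (M *ᵥ x) from rfl, euclid_norm_symm, euclid_norm_symm] at h
  exact h

lemma sum_sq_nonneg {γ : Type*} [Fintype γ] (x : γ → ℝ) : 0 ≤ ∑ c, x c ^ 2 :=
  Finset.sum_nonneg fun _ _ => sq_nonneg _

lemma mulVec_sq_le (M : Matrix α β ℝ) (x : β → ℝ) :
    ∑ a, (M *ᵥ x) a ^ 2 ≤ specNorm M ^ 2 * ∑ b, x b ^ 2 := by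
  have h := mulVec_sqrt_le M x
  have h1 : 0 ≤ Real.sqrt (∑ a, (M *ᵥ x) a ^ 2) := Real.sqrt_nonneg _
  have h2 := Real.sq_sqrt (sum_sq_nonneg (M *ᵥ x))
  have h3 := Real.sq_sqrt (sum_sq_nonneg x)
  nlinarith [Real.sqrt_nonneg (∑ b, x b ^ 2), specNorm_nonneg M]

lemma specNorm_le_of_sq {M : Matrix α β ℝ} {c : ℝ} (hc : 0 ≤ c)
    (h : ∀ x : β → ℝ, ∑ a, (M *ᵥ x) a ^ 2 ≤ c ^ 2 * ∑ b, x b ^ 2) :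
    specNorm M ≤ c := by
  refine ContinuousLinearMap.opNorm_le_bound _ hc fun v => ?_
  set x : β → ℝ := WithLp.equiv 2 (β → ℝ) v with hx
  have hv : v = (WithLp.equiv 2 (β → ℝ)).symm x := rfl
  rw [hv]
  simp only [LinearMap.coe_toContinuousLinearMap']
  rw [show Matrix.toEuclideanLin M ((WithLp.equiv 2 (β → ℝ)).symm x) = (WithLp.equiv 2 (α → ℝ)).symm (M *ᵥ x) from rfl, euclid_norm_symm, euclid_norm_symm]
  rw [← Real.sqrt_sq hc, ← Real.sqrt_mul (sq_nonneg c)]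
  exact Real.sqrt_le_sqrt (h x)

lemma specNorm_add_le (M N : Matrix α β ℝ) :
    specNorm (M + N) ≤ specNorm M + specNorm N := by
  unfold specNorm
  rw [map_add, map_add]
  exact norm_add_le _ _

lemma specNorm_smul_le (c : ℝ) (M : Matrix α β ℝ) :
    specNorm (c • M) ≤ |c| * specNorm M := by
  unfold specNorm
  rw [_root_.map_smul, _root_.map_smul]
  simpa using ContinuousLinearMap.opNorm_smul_le c (LinearMap.toContinuousLinearMap (Matrix.toEuclideanLin M))

lemma specNorm_sum_le {ι : Type*} (s : Finset ι) (M : ι → Matrix α β ℝ) :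
    specNorm (∑ t ∈ s, M t) ≤ ∑ t ∈ s, specNorm (M t) := by
  unfold specNorm
  rw [map_sum, map_sum]
  exact norm_sum_le _ _

lemma row_sq_le (N : Matrix α β ℝ) (i : α) : ∑ c, N i c ^ 2 ≤ specNorm N ^ 2 := by
  set x : β → ℝ := fun c => N i c with hx
  have key : (N *ᵥ x) i = ∑ c, x c ^ 2 := by
    simp [Matrix.mulVec, dotProduct, hx, sq]
  have h1 : ((N *ᵥ x) i) ^ 2 ≤ ∑ a, (N *ᵥ x) a ^ 2 :=
    Finset.single_le_sum (f := fun a => (N *ᵥ x) a ^ 2) (fun a _ => sq_nonneg _) (Finset.mem_univ i)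
  have h2 := mulVec_sq_le N x
  rw [key] at h1
  rcases eq_or_lt_of_le (sum_sq_nonneg x) with h0 | h0
  · rw [← h0]; exact sq_nonneg _
  · have := le_trans h1 h2
    calc ∑ c, x c ^ 2 ≤ specNorm N ^ 2 := by nlinarith
    _ = specNorm N ^ 2 := rfl

end Foundation


section Core

/-- Core estimate: a block matrix with at most one copy of `N` per block row/column,
placed via a partial injection, has spectral norm at most that of `N`. -/
lemma specNorm_shift_le {L p q : ℕ} (N : Matrix (Fin p) (Fin q) ℝ)
    (v : Fin L → Prop) [DecidablePred v] (σ : Fin L → Fin L)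
    (hinj : ∀ r r', v r → v r' → σ r = σ r' → r = r')
    (W : Matrix (Fin L × Fin p) (Fin L × Fin q) ℝ)
    (hW : ∀ r a s b, W (r,a) (s,b) = if v r ∧ s = σ r then N a b else 0) :
    specNorm W ≤ specNorm N := by
  refine specNorm_le_of_sq (specNorm_nonneg N) fun x => ?_
  have hWx : ∀ r a, (W *ᵥ x) (r,a)
      = if v r then (N *ᵥ fun b => x (σ r, b)) a else 0 := by
    intro r a
    simp only [Matrix.mulVec, dotProduct, Fintype.sum_prod_type]
    by_cases hv : v r
    · simp only [hv, true_and, if_true]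
      rw [Finset.sum_eq_single (σ r)]
      · simp only [hW, hv, true_and, if_pos rfl]
        simp [Matrix.mulVec, dotProduct]
      · intro s _ hs
        apply Finset.sum_eq_zero
        intro b _
        rw [hW]
        simp [hs, hv]
      · intro h; exact absurd (Finset.mem_univ _) h
    · rw [if_neg hv]
      apply Finset.sum_eq_zero
      intro s _
      apply Finset.sum_eq_zero
      intro b _
      rw [hW]
      simp [hv]
  calc ∑ ra : Fin L × Fin p, (W *ᵥ x) ra ^ 2
      = ∑ r, ∑ a, (W *ᵥ x) (r, a) ^ 2 := Fintype.sum_prod_type _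
    _ = ∑ r, (if v r then ∑ a, (N *ᵥ fun b => x (σ r, b)) a ^ 2 else 0) := by
        refine Finset.sum_congr rfl fun r _ => ?_
        by_cases hv : v r <;> simp [hWx, hv]
    _ ≤ ∑ r, (if v r then specNorm N ^ 2 * ∑ b, x (σ r, b) ^ 2 else 0) := by
        refine Finset.sum_le_sum fun r _ => ?_
        by_cases hv : v r
        · simp only [hv, if_true]; exact mulVec_sq_le N _
        · simp [hv]
    _ = specNorm N ^ 2 * ∑ r ∈ Finset.univ.filter v, ∑ b, x (σ r, b) ^ 2 := by
        rw [Finset.mul_sum, Finset.sum_filter]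
    _ ≤ specNorm N ^ 2 * ∑ s : Fin L, ∑ b, x (s, b) ^ 2 := by
        apply mul_le_mul_of_nonneg_left _ (sq_nonneg _)
        have himg : ∑ r ∈ Finset.univ.filter v, ∑ b, x (σ r, b) ^ 2
            = ∑ s ∈ (Finset.univ.filter v).image σ, ∑ b, x (s, b) ^ 2 := by
          rw [Finset.sum_image]
          intro r hr r' hr' h
          exact hinj r r' (Finset.mem_filter.mp hr).2 (Finset.mem_filter.mp hr').2 h
        rw [himg]
        exact Finset.sum_le_sum_of_subset_of_nonneg (Finset.subset_univ _)
          (fun s _ _ => sum_sq_nonneg _)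
    _ = specNorm N ^ 2 * ∑ sb : Fin L × Fin q, x sb ^ 2 := by
        rw [Fintype.sum_prod_type]

lemma specNorm_rowEmbed_le {a q n : ℕ} (N : Matrix (Fin a) (Fin q) ℝ) (i : Fin a) (j : Fin n) :
    specNorm (rowEmbed n N i j) ≤ specNorm N := by
  refine specNorm_le_of_sq (specNorm_nonneg N) fun x => ?_
  have h1 : ∀ r, (rowEmbed n N i j *ᵥ x) r = if r = j then (N *ᵥ x) i else 0 := by
    intro r
    simp only [Matrix.mulVec, dotProduct, rowEmbed, Matrix.of_apply]
    by_cases hr : r = j <;> simp [hr]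
  calc ∑ r, (rowEmbed n N i j *ᵥ x) r ^ 2 = (N *ᵥ x) i ^ 2 := by
        simp only [h1]
        rw [Finset.sum_eq_single j] <;> simp_all
    _ ≤ ∑ a', (N *ᵥ x) a' ^ 2 :=
        Finset.single_le_sum (f := fun a' => (N *ᵥ x) a' ^ 2)
          (fun _ _ => sq_nonneg _) (Finset.mem_univ i)
    _ ≤ specNorm N ^ 2 * ∑ b, x b ^ 2 := mulVec_sq_le N x

lemma specNorm_rowEmbed_transpose_le {a q n : ℕ} (N : Matrix (Fin a) (Fin q) ℝ)
    (i : Fin a) (j : Fin n) :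
    specNorm (rowEmbed n N i j)ᵀ ≤ specNorm N := by
  refine specNorm_le_of_sq (specNorm_nonneg N) fun x => ?_
  have h1 : ∀ c, ((rowEmbed n N i j)ᵀ *ᵥ x) c = N i c * x j := by
    intro c
    simp only [Matrix.mulVec, dotProduct, Matrix.transpose_apply, rowEmbed,
      Matrix.of_apply]
    rw [Finset.sum_eq_single j] <;> simp_all
  calc ∑ c, ((rowEmbed n N i j)ᵀ *ᵥ x) c ^ 2 = (∑ c, N i c ^ 2) * x j ^ 2 := by
        simp only [h1, mul_pow, Finset.sum_mul]
    _ ≤ specNorm N ^ 2 * x j ^ 2 :=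
        mul_le_mul_of_nonneg_right (row_sq_le N i) (sq_nonneg _)
    _ ≤ specNorm N ^ 2 * ∑ b, x b ^ 2 := by
        apply mul_le_mul_of_nonneg_left _ (sq_nonneg _)
        exact Finset.single_le_sum (f := fun b => x b ^ 2) (fun _ _ => sq_nonneg _)
          (Finset.mem_univ j)

end Core

noncomputable section
def shiftW {p q : ℕ} (T T₀ : ℕ) (τ : ℕ) (N : Matrix (Fin p) (Fin q) ℝ) :
    Matrix (Fin (T + T₀ + 1) × Fin p) (Fin (T + T₀ + 1) × Fin q) ℝ :=
  Matrix.of fun rp sq =>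
    if (T₀ + 1 ≤ (rp.1 : ℕ) ∧ τ < (rp.1 : ℕ)) ∧ (sq.1 : ℕ) = (rp.1 : ℕ) - 1 - τ
    then N rp.2 sq.2 else 0
end

section Decomp
variable {p q : ℕ} (T T₀ : ℕ)

lemma R1_eq_sum_shiftW (f : ℕ → Matrix (Fin p) (Fin q) ℝ) :
    R1 T T₀ f = ∑ τ ∈ Finset.range (T + T₀ + 1), shiftW T T₀ τ (f τ) := by
  ext ⟨r, a⟩ ⟨s, b⟩
  rw [Matrix.sum_apply]
  simp only [R1, shiftW, Matrix.of_apply]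
  have hr := r.isLt
  have hs := s.isLt
  by_cases h : T₀ + 1 ≤ (r : ℕ) ∧ (s : ℕ) < (r : ℕ)
  · rw [if_pos h, Finset.sum_eq_single ((r : ℕ) - 1 - (s : ℕ))]
    · rw [if_pos ⟨⟨h.1, by omega⟩, by omega⟩]
    · intro τ _ hτ
      rw [if_neg]
      rintro ⟨⟨h1, h2⟩, h3⟩
      exact hτ (by omega)
    · intro hmem
      exact absurd (Finset.mem_range.mpr (by omega)) hmem
  · rw [if_neg h]
    symm
    apply Finset.sum_eq_zero
    intro τ _
    rw [if_neg]
    rintro ⟨⟨h1, h2⟩, h3⟩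
    exact h ⟨h1, by omega⟩

lemma specNorm_shiftW_le (τ : ℕ) (N : Matrix (Fin p) (Fin q) ℝ) :
    specNorm (shiftW T T₀ τ N) ≤ specNorm N := by
  refine specNorm_shift_le N
    (fun r => T₀ + 1 ≤ (r : ℕ) ∧ τ < (r : ℕ))
    (fun r => ⟨(r : ℕ) - 1 - τ, by have := r.isLt; omega⟩) ?_ _ ?_
  · intro r r' h h' heq
    have := congrArg Fin.val heq
    simp only at this
    exact Fin.ext (by omega)
  · intro r a s b
    simp only [shiftW, Matrix.of_apply]
    congr 1
    rw [eq_iff_iff]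
    constructor
    · rintro ⟨h1, h2⟩; exact ⟨h1, Fin.ext h2⟩
    · rintro ⟨h1, h2⟩; exact ⟨h1, congrArg Fin.val h2⟩

lemma specNorm_shiftW_transpose_le (τ : ℕ) (N : Matrix (Fin p) (Fin q) ℝ) :
    specNorm (shiftW T T₀ τ N)ᵀ ≤ specNorm Nᵀ := by
  refine specNorm_shift_le Nᵀ
    (fun s => (s : ℕ) + τ + 1 < T + T₀ + 1 ∧ T₀ + 1 ≤ (s : ℕ) + τ + 1)
    (fun s => if h : (s : ℕ) + τ + 1 < T + T₀ + 1 then ⟨(s : ℕ) + τ + 1, h⟩ else s) ?_ _ ?_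
  · intro s s' h h' heq
    rw [dif_pos h.1, dif_pos h'.1] at heq
    have := congrArg Fin.val heq
    simp only at this
    exact Fin.ext (by omega)
  · intro s b r a
    simp only [Matrix.transpose_apply, shiftW, Matrix.of_apply]
    have hrlt := r.isLt
    by_cases hv : (s : ℕ) + τ + 1 < T + T₀ + 1 ∧ T₀ + 1 ≤ (s : ℕ) + τ + 1
    · rw [dif_pos hv.1]
      by_cases hre : (r : ℕ) = (s : ℕ) + τ + 1
      · rw [if_pos ⟨⟨by omega, by omega⟩, by omega⟩, if_pos ⟨hv, Fin.ext hre⟩]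
      · rw [if_neg, if_neg]
        · rintro ⟨h1, h2⟩
          exact hre (congrArg Fin.val h2)
        · rintro ⟨⟨h1, h2⟩, h3⟩
          exact hre (by omega)
    · rw [if_neg, if_neg]
      · rintro ⟨h1, h2⟩; exact hv h1
      · rintro ⟨⟨h1, h2⟩, h3⟩
        exact hv ⟨by omega, by omega⟩

lemma specNorm_R1_le (f : ℕ → Matrix (Fin p) (Fin q) ℝ) (S : ℕ → ℝ)
    (hS : ∀ τ, specNorm (f τ) ≤ S τ) :
    specNorm (R1 T T₀ f) ≤ ∑ τ ∈ Finset.range (T + T₀ + 1), S τ := by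
  rw [R1_eq_sum_shiftW]
  refine le_trans (specNorm_sum_le _ _) (Finset.sum_le_sum fun τ _ => ?_)
  exact le_trans (specNorm_shiftW_le T T₀ τ (f τ)) (hS τ)

lemma specNorm_R1_transpose_le (f : ℕ → Matrix (Fin p) (Fin q) ℝ) (S : ℕ → ℝ)
    (hS : ∀ τ, specNorm (f τ)ᵀ ≤ S τ) :
    specNorm (R1 T T₀ f)ᵀ ≤ ∑ τ ∈ Finset.range (T + T₀ + 1), S τ := by
  rw [R1_eq_sum_shiftW, Matrix.transpose_sum]
  refine le_trans (specNorm_sum_le _ _) (Finset.sum_le_sum fun τ _ => ?_)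
  exact le_trans (specNorm_shiftW_transpose_le T T₀ τ (f τ)) (hS τ)

end Decomp

section Blocks
variable {α β : Type*} [Fintype α] [Fintype β] [DecidableEq α] [DecidableEq β]

lemma mulVec_sq_le_of {M : Matrix α β ℝ} {c : ℝ} (hc : 0 ≤ c) (hM : specNorm M ≤ c)
    (x : β → ℝ) : ∑ a, (M *ᵥ x) a ^ 2 ≤ c ^ 2 * ∑ b, x b ^ 2 := by
  refine le_trans (mulVec_sq_le M x) ?_
  exact mul_le_mul_of_nonneg_right (pow_le_pow_left₀ (specNorm_nonneg M) hM 2)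
    (sum_sq_nonneg x)

lemma sum_sq_sum_type (x : α ⊕ β → ℝ) :
    ∑ y, x y ^ 2 = (∑ a, x (Sum.inl a) ^ 2) + ∑ b, x (Sum.inr b) ^ 2 :=
  Fintype.sum_sum_type _

lemma specNorm_fromBlocks_diag_le (P : Matrix α α ℝ) {c : ℝ} (hc : 0 ≤ c)
    (hP : specNorm P ≤ c) :
    specNorm (Matrix.fromBlocks P 0 0 (0 : Matrix β β ℝ)) ≤ c := by
  refine specNorm_le_of_sq hc fun x => ?_
  have hmv := Matrix.fromBlocks_mulVec P (0 : Matrix α β ℝ) (0 : Matrix β α ℝ)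
    (0 : Matrix β β ℝ) x
  rw [sum_sq_sum_type, sum_sq_sum_type, hmv]
  simp only [Matrix.zero_mulVec, add_zero, zero_add, Sum.elim_inl, Sum.elim_inr,
    Pi.zero_apply, Pi.add_apply]
  have h1 := mulVec_sq_le_of hc hP (x ∘ Sum.inl)
  have h2 : (0 : ℝ) + ∑ b : β, (0:ℝ) ^ 2 = 0 := by simp
  have h3 : (0:ℝ) ≤ ∑ b : β, x (Sum.inr b) ^ 2 := sum_sq_nonneg _
  simp only [Function.comp] at h1 ⊢
  nlinarith [sum_sq_nonneg (fun a : α => x (Sum.inl a))]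

lemma specNorm_fromBlocks_offdiag_le (Q : Matrix α β ℝ) (R : Matrix β α ℝ) {d : ℝ}
    (hd : 0 ≤ d) (hQ : specNorm Q ≤ d) (hR : specNorm R ≤ d) :
    specNorm (Matrix.fromBlocks (0 : Matrix α α ℝ) Q R (0 : Matrix β β ℝ)) ≤ d := by
  refine specNorm_le_of_sq hd fun x => ?_
  have hmv := Matrix.fromBlocks_mulVec (0 : Matrix α α ℝ) Q R (0 : Matrix β β ℝ) x
  rw [sum_sq_sum_type, sum_sq_sum_type, hmv]
  simp only [Matrix.zero_mulVec, add_zero, zero_add, Sum.elim_inl, Sum.elim_inr]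
  have h1 := mulVec_sq_le_of hd hQ (x ∘ Sum.inr)
  have h2 := mulVec_sq_le_of hd hR (x ∘ Sum.inl)
  simp only [Function.comp] at h1 h2 ⊢
  linarith

lemma specNorm_fromBlocks_le (P : Matrix α α ℝ) (Q : Matrix α β ℝ) (R : Matrix β α ℝ)
    {c d : ℝ} (hc : 0 ≤ c) (hd : 0 ≤ d)
    (hP : specNorm P ≤ c) (hQ : specNorm Q ≤ d) (hR : specNorm R ≤ d) :
    specNorm (Matrix.fromBlocks P Q R (0 : Matrix β β ℝ)) ≤ c + d := by
  have hsplit : Matrix.fromBlocks P Q R (0 : Matrix β β ℝ)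
      = Matrix.fromBlocks P 0 0 0 + Matrix.fromBlocks 0 Q R 0 := by
    rw [Matrix.fromBlocks_add]
    simp
  rw [hsplit]
  exact le_trans (specNorm_add_le _ _)
    (add_le_add (specNorm_fromBlocks_diag_le P hc hP)
      (specNorm_fromBlocks_offdiag_le Q R hd hQ hR))

end Blocks

lemma geom_bound {ρ : ℝ} (hρ0 : 0 ≤ ρ) (hρ1 : ρ < 1) {C : ℝ} (hC : 0 ≤ C) (L : ℕ) :
    ∑ τ ∈ Finset.range L, C * ρ ^ τ ≤ C / (1 - ρ) := by
  rw [← Finset.mul_sum]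
  have h3 : (0:ℝ) < 1 - ρ := by linarith
  have h1 : ∑ τ ∈ Finset.range L, ρ ^ τ ≤ 1 / (1 - ρ) := by
    rw [le_div_iff₀ h3]
    have := geom_sum_mul (x := ρ) L
    have hL : 0 ≤ ρ ^ L := pow_nonneg hρ0 L
    nlinarith
  calc C * ∑ τ ∈ Finset.range L, ρ ^ τ ≤ C * (1 / (1 - ρ)) :=
        mul_le_mul_of_nonneg_left h1 hC
    _ = C / (1 - ρ) := by ring

section Trace
variable {γ : Type*} [Fintype γ] [DecidableEq γ]

lemma sum_eigenvalues_sq_eq_trace {M : Matrix γ γ ℝ} (hM : M.IsHermitian) :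
    ∑ k, hM.eigenvalues k ^ 2 = (M * M).trace := by
  have hsp := hM.spectral_theorem
  set U : Matrix γ γ ℝ := (hM.eigenvectorUnitary : Matrix γ γ ℝ) with hUdef
  set D : Matrix γ γ ℝ := Matrix.diagonal (RCLike.ofReal ∘ hM.eigenvalues) with hDdef
  have hU : star U * U = 1 := Matrix.mem_unitaryGroup_iff'.mp hM.eigenvectorUnitary.2
  have hMM : M * M = U * (D * D) * star U := by
    rw [hsp]
    calc U * D * star U * (U * D * star U) = U * (D * ((star U * U) * D)) * star U := by
          noncomm_ring
      _ = U * (D * D) * star U := by rw [hU, one_mul]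
  rw [hMM, Matrix.trace_mul_cycle, ← Matrix.mul_assoc, hU, Matrix.one_mul]
  rw [hDdef, Matrix.diagonal_mul_diagonal, Matrix.trace_diagonal]
  refine (Finset.sum_congr rfl fun k _ => ?_).symm
  simp [sq, Function.comp]

omit [DecidableEq γ] in
lemma trace_sq_eq_sum_sq {M : Matrix γ γ ℝ} (hM : M.IsHermitian) :
    (M * M).trace = ∑ x, ∑ y, M x y ^ 2 := by
  have hsymm : ∀ x y : γ, M y x = M x y := by
    intro x y
    have := congr_fun (congr_fun hM x) y
    simpa [Matrix.conjTranspose_apply] using this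
  rw [Matrix.trace]
  refine Finset.sum_congr rfl fun x _ => ?_
  rw [Matrix.diag_apply, Matrix.mul_apply]
  exact Finset.sum_congr rfl fun y _ => by rw [hsymm x y, sq]

end Trace

section Frobenius

lemma filter_range_card (T T₀ : ℕ) :
    ((Finset.range (T + T₀ + 1)).filter (fun k => T₀ + 1 ≤ k)).card = T := by
  have : (Finset.range (T + T₀ + 1)).filter (fun k => T₀ + 1 ≤ k)
      = Finset.Ico (T₀ + 1) (T + T₀ + 1) := by
    ext k
    simp only [Finset.mem_filter, Finset.mem_range, Finset.mem_Ico]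
    omega
  rw [this, Nat.card_Ico]
  omega

lemma R1_frobenius_le {p q : ℕ} (T T₀ : ℕ) (f : ℕ → Matrix (Fin p) (Fin q) ℝ)
    {c ρ : ℝ} (hc : 0 ≤ c) (hρ0 : 0 ≤ ρ) (hρ1 : ρ < 1)
    (hf : ∀ τ, ∑ a, ∑ b, f τ a b ^ 2 ≤ c * ρ ^ τ) :
    ∑ ra : Fin (T+T₀+1) × Fin p, ∑ sb : Fin (T+T₀+1) × Fin q, (R1 T T₀ f) ra sb ^ 2
      ≤ (T : ℝ) * (c / (1 - ρ)) := by
  have h1ρ : (0:ℝ) < 1 - ρ := by linarith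
  have key : ∀ r : Fin (T+T₀+1), ∑ s : Fin (T+T₀+1), ∑ a, ∑ b,
      (R1 T T₀ f) (r, a) (s, b) ^ 2
      ≤ if T₀ + 1 ≤ (r:ℕ) then c / (1 - ρ) else 0 := by
    intro r
    by_cases hr : T₀ + 1 ≤ (r:ℕ)
    · rw [if_pos hr]
      have step1 : ∀ s : Fin (T+T₀+1), ∑ a, ∑ b, (R1 T T₀ f) (r, a) (s, b) ^ 2
          ≤ if (s:ℕ) < (r:ℕ) then c * ρ ^ ((r:ℕ) - 1 - (s:ℕ)) else 0 := by
        intro s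
        by_cases hs : (s:ℕ) < (r:ℕ)
        · rw [if_pos hs]
          refine le_trans (le_of_eq ?_) (hf ((r:ℕ) - 1 - (s:ℕ)))
          refine Finset.sum_congr rfl fun a _ => Finset.sum_congr rfl fun b _ => ?_
          simp only [R1, Matrix.of_apply]
          rw [if_pos ⟨hr, hs⟩]
        · rw [if_neg hs]
          apply le_of_eq
          refine Finset.sum_eq_zero fun a _ => Finset.sum_eq_zero fun b _ => ?_
          simp only [R1, Matrix.of_apply]
          rw [if_neg (fun h => hs h.2)]
          simp
      refine le_trans (Finset.sum_le_sum fun s _ => step1 s) ?_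
      rw [Fin.sum_univ_eq_sum_range (fun k => if k < (r:ℕ) then c * ρ ^ ((r:ℕ) - 1 - k) else 0)]
      have hfilt : ∑ k ∈ Finset.range (T+T₀+1), (if k < (r:ℕ) then c * ρ ^ ((r:ℕ) - 1 - k) else 0)
          = ∑ k ∈ Finset.range (r:ℕ), c * ρ ^ ((r:ℕ) - 1 - k) := by
        rw [← Finset.sum_filter]
        congr 1
        ext k
        simp only [Finset.mem_filter, Finset.mem_range]
        have := r.isLt
        omega
      rw [hfilt, Finset.sum_range_reflect (fun k => c * ρ ^ k) (r:ℕ)]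
      exact geom_bound hρ0 hρ1 hc (r:ℕ)
    · rw [if_neg hr]
      apply le_of_eq
      refine Finset.sum_eq_zero fun s _ => Finset.sum_eq_zero fun a _ =>
        Finset.sum_eq_zero fun b _ => ?_
      simp only [R1, Matrix.of_apply]
      rw [if_neg (fun h => hr h.1)]
      simp
  calc ∑ ra : Fin (T+T₀+1) × Fin p, ∑ sb : Fin (T+T₀+1) × Fin q, (R1 T T₀ f) ra sb ^ 2
      = ∑ r : Fin (T+T₀+1), ∑ s : Fin (T+T₀+1), ∑ a, ∑ b,
        (R1 T T₀ f) (r, a) (s, b) ^ 2 := by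
        rw [Fintype.sum_prod_type (f := fun ra : Fin (T+T₀+1) × Fin p =>
          ∑ sb : Fin (T+T₀+1) × Fin q, (R1 T T₀ f) ra sb ^ 2)]
        refine Finset.sum_congr rfl fun r _ => ?_
        have h1 : ∀ a : Fin p, ∑ sb : Fin (T+T₀+1) × Fin q, (R1 T T₀ f) (r, a) sb ^ 2
            = ∑ s : Fin (T+T₀+1), ∑ b, (R1 T T₀ f) (r, a) (s, b) ^ 2 := fun a =>
          Fintype.sum_prod_type _
        simp_rw [h1]
        exact Finset.sum_comm
    _ ≤ ∑ r : Fin (T+T₀+1), (if T₀ + 1 ≤ (r:ℕ) then c / (1 - ρ) else 0) :=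
        Finset.sum_le_sum fun r _ => key r
    _ = (T : ℝ) * (c / (1 - ρ)) := by
        rw [Fin.sum_univ_eq_sum_range (fun k => if T₀ + 1 ≤ k then c / (1 - ρ) else 0)]
        rw [← Finset.sum_filter, Finset.sum_const, filter_range_card, nsmul_eq_mul]

end Frobenius


lemma rowEmbed_frobenius_le {a q : ℕ} (n : ℕ) (N : Matrix (Fin a) (Fin q) ℝ)
    (i : Fin a) (j : Fin n) :
    ∑ r, ∑ c, rowEmbed n N i j r c ^ 2 ≤ specNorm N ^ 2 := by
  have h : ∀ r : Fin n, ∑ c, rowEmbed n N i j r c ^ 2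
      = if r = j then ∑ c, N i c ^ 2 else 0 := by
    intro r
    by_cases hr : r = j <;> simp [rowEmbed, hr]
  rw [Finset.sum_congr rfl (fun r _ => h r), Finset.sum_ite_eq' Finset.univ j
    (fun _ => ∑ c, N i c ^ 2)]
  simpa using row_sq_le N i

lemma sum_sq_fromBlocks {α β : Type*} [Fintype α] [Fintype β]
    (P : Matrix α α ℝ) (Q : Matrix α β ℝ) (R : Matrix β α ℝ) :
    ∑ x, ∑ y, (Matrix.fromBlocks P Q R (0 : Matrix β β ℝ)) x y ^ 2
      = ((∑ a, ∑ b, P a b ^ 2) + ∑ a, ∑ b, Q a b ^ 2) + ∑ a, ∑ b, R a b ^ 2 := by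
  rw [Fintype.sum_sum_type (f := fun x => ∑ y,
    (Matrix.fromBlocks P Q R (0 : Matrix β β ℝ)) x y ^ 2)]
  have h1 : ∀ a : α, ∑ y, (Matrix.fromBlocks P Q R (0 : Matrix β β ℝ)) (Sum.inl a) y ^ 2
      = (∑ b, P a b ^ 2) + ∑ b, Q a b ^ 2 := by
    intro a
    rw [Fintype.sum_sum_type (f := fun y =>
      (Matrix.fromBlocks P Q R (0 : Matrix β β ℝ)) (Sum.inl a) y ^ 2)]
    rfl
  have h2 : ∀ a : β, ∑ y, (Matrix.fromBlocks P Q R (0 : Matrix β β ℝ)) (Sum.inr a) y ^ 2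
      = ∑ b, R a b ^ 2 := by
    intro a
    rw [Fintype.sum_sum_type (f := fun y =>
      (Matrix.fromBlocks P Q R (0 : Matrix β β ℝ)) (Sum.inr a) y ^ 2)]
    simp [Matrix.fromBlocks_apply₂₂]
  simp_rw [h1, h2]
  rw [Finset.sum_add_distrib]

noncomputable section


noncomputable section

set_option maxHeartbeats 2000000 in
/-- Eigenvalue bounds for the quadratic-form matrix `R_G`:
every eigenvalue satisfies `|λ| ≤ (3/2) Cη²/(1−ρ)` and the eigenvalues' squares sum to at
most `(9/2) C²η⁴ T/(1−ρ)²`. -/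
theorem statement_9 (n m T T₀ : ℕ) (hn : 1 ≤ n) (hm : 1 ≤ m) (hT : 1 ≤ T)
    (i j : Fin n)
    (A : Matrix (Fin n) (Fin n) ℝ) (B : Matrix (Fin n) (Fin m) ℝ)
    (K : Matrix (Fin m) (Fin n) ℝ) (η C ρ : ℝ)
    (hη : 0 < η) (hC : 1 ≤ C) (hρ0 : 0 ≤ ρ) (hρ1 : ρ < 1)
    (hspec1 : ∀ τ : ℕ, specNorm ((A + B * K) ^ τ) ≤ C * ρ ^ τ)
    (hspec2 : ∀ τ : ℕ, specNorm ((A + B * K) ^ τ * B) ≤ C * ρ ^ τ)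
    (RG : Matrix ((Fin (T + T₀ + 1) × Fin n) ⊕ (Fin (T + T₀ + 1) × Fin m))
      ((Fin (T + T₀ + 1) × Fin n) ⊕ (Fin (T + T₀ + 1) × Fin m)) ℝ)
    (hRG : RG = Matrix.fromBlocks
      (η ^ 2 • R1sym T T₀ (fun τ => rowEmbed n ((A + B * K) ^ τ) i j))
      ((η ^ 2 / 2) • R1 T T₀ (fun τ => rowEmbed n ((A + B * K) ^ τ * B) i j))
      ((η ^ 2 / 2) • (R1 T T₀ (fun τ => rowEmbed n ((A + B * K) ^ τ * B) i j))ᵀ)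
      0) :
    (∀ lam ∈ spectrum ℝ RG, |lam| ≤ (3 / 2) * C * η ^ 2 / (1 - ρ)) ∧
    (∀ hH : RG.IsHermitian,
      ∑ idx, hH.eigenvalues idx ^ 2 ≤ (9 / 2) * C ^ 2 * η ^ 4 * (T : ℝ) / (1 - ρ) ^ 2) := by
  have h1ρ : (0:ℝ) < 1 - ρ := by linarith
  have hC0 : (0:ℝ) ≤ C := by linarith
  set M := A + B * K with hM
  set f : ℕ → Matrix (Fin n) (Fin n) ℝ := fun τ => rowEmbed n (M ^ τ) i j with hf
  set g : ℕ → Matrix (Fin n) (Fin m) ℝ := fun τ => rowEmbed n (M ^ τ * B) i j with hg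
  -- spectral norm bounds for the pieces
  have hfS : ∀ τ, specNorm (f τ) ≤ C * ρ ^ τ :=
    fun τ => le_trans (specNorm_rowEmbed_le _ _ _) (hspec1 τ)
  have hfT : ∀ τ, specNorm (f τ)ᵀ ≤ C * ρ ^ τ :=
    fun τ => le_trans (specNorm_rowEmbed_transpose_le _ _ _) (hspec1 τ)
  have hgS : ∀ τ, specNorm (g τ) ≤ C * ρ ^ τ :=
    fun τ => le_trans (specNorm_rowEmbed_le _ _ _) (hspec2 τ)
  have hgT : ∀ τ, specNorm (g τ)ᵀ ≤ C * ρ ^ τ :=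
    fun τ => le_trans (specNorm_rowEmbed_transpose_le _ _ _) (hspec2 τ)
  have hgeo := geom_bound hρ0 hρ1 hC0 (T + T₀ + 1)
  have hR1f : specNorm (R1 T T₀ f) ≤ C / (1 - ρ) :=
    le_trans (specNorm_R1_le T T₀ f _ hfS) hgeo
  have hR1fT : specNorm (R1 T T₀ f)ᵀ ≤ C / (1 - ρ) :=
    le_trans (specNorm_R1_transpose_le T T₀ f _ hfT) hgeo
  have hR1g : specNorm (R1 T T₀ g) ≤ C / (1 - ρ) :=
    le_trans (specNorm_R1_le T T₀ g _ hgS) hgeo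
  have hR1gT : specNorm (R1 T T₀ g)ᵀ ≤ C / (1 - ρ) :=
    le_trans (specNorm_R1_transpose_le T T₀ g _ hgT) hgeo
  have hCdiv : 0 ≤ C / (1 - ρ) := div_nonneg hC0 (le_of_lt h1ρ)
  have hη2 : (0:ℝ) < η ^ 2 := by positivity
  -- top-left block
  have hPbound : specNorm (η ^ 2 • R1sym T T₀ f) ≤ η ^ 2 * (C / (1 - ρ)) := by
    have h1 : η ^ 2 • R1sym T T₀ f
        = (η ^ 2 * (2:ℝ)⁻¹) • (R1 T T₀ f + (R1 T T₀ f)ᵀ) := by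
      rw [R1sym, smul_smul]
    rw [h1]
    refine le_trans (specNorm_smul_le _ _) ?_
    have h2 : specNorm (R1 T T₀ f + (R1 T T₀ f)ᵀ) ≤ 2 * (C / (1 - ρ)) := by
      refine le_trans (specNorm_add_le _ _) ?_
      linarith
    calc |η ^ 2 * (2:ℝ)⁻¹| * specNorm (R1 T T₀ f + (R1 T T₀ f)ᵀ)
        ≤ |η ^ 2 * (2:ℝ)⁻¹| * (2 * (C / (1 - ρ))) :=
          mul_le_mul_of_nonneg_left h2 (abs_nonneg _)
      _ = η ^ 2 * (C / (1 - ρ)) := by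
          rw [abs_of_pos (by positivity)]
          ring
  have hQbound : specNorm ((η ^ 2 / 2) • R1 T T₀ g) ≤ η ^ 2 / 2 * (C / (1 - ρ)) := by
    refine le_trans (specNorm_smul_le _ _) ?_
    rw [abs_of_pos (by positivity)]
    exact mul_le_mul_of_nonneg_left hR1g (by positivity)
  have hRbound : specNorm ((η ^ 2 / 2) • (R1 T T₀ g)ᵀ) ≤ η ^ 2 / 2 * (C / (1 - ρ)) := by
    refine le_trans (specNorm_smul_le _ _) ?_
    rw [abs_of_pos (by positivity)]
    exact mul_le_mul_of_nonneg_left hR1gT (by positivity)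
  have hRGnorm : specNorm RG ≤ (3 / 2) * C * η ^ 2 / (1 - ρ) := by
    rw [hRG]
    have h := specNorm_fromBlocks_le (η ^ 2 • R1sym T T₀ f)
      ((η ^ 2 / 2) • R1 T T₀ g) ((η ^ 2 / 2) • (R1 T T₀ g)ᵀ)
      (by positivity) (by positivity) hPbound hQbound hRbound
    refine le_trans h (le_of_eq ?_)
    field_simp
    ring
  have hKnonneg : 0 ≤ (3 / 2) * C * η ^ 2 / (1 - ρ) := by positivity
  constructor
  · -- Part 1
    intro lam hlam
    rw [spectrum.mem_iff] at hlam
    rw [Matrix.isUnit_iff_isUnit_det, isUnit_iff_ne_zero, not_not] at hlam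
    obtain ⟨v, hv0, hveq⟩ := Matrix.exists_mulVec_eq_zero_iff.mpr hlam
    have halg : (algebraMap ℝ (Matrix ((Fin (T + T₀ + 1) × Fin n) ⊕ (Fin (T + T₀ + 1) × Fin m))
        ((Fin (T + T₀ + 1) × Fin n) ⊕ (Fin (T + T₀ + 1) × Fin m)) ℝ)) lam
        = lam • (1 : Matrix _ _ ℝ) := Algebra.algebraMap_eq_smul_one lam
    rw [halg, Matrix.sub_mulVec, Matrix.smul_mulVec, Matrix.one_mulVec,
      sub_eq_zero] at hveq
    -- hveq : lam • v = RG *ᵥ v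
    have h1 : ∑ y, (RG *ᵥ v) y ^ 2
        ≤ ((3 / 2) * C * η ^ 2 / (1 - ρ)) ^ 2 * ∑ y, v y ^ 2 :=
      mulVec_sq_le_of hKnonneg hRGnorm v
    rw [← hveq] at h1
    have h2 : ∑ y, (lam • v) y ^ 2 = lam ^ 2 * ∑ y, v y ^ 2 := by
      rw [Finset.mul_sum]
      exact Finset.sum_congr rfl fun y _ => by
        simp [Pi.smul_apply, smul_eq_mul]; ring
    rw [h2] at h1
    have hvpos : 0 < ∑ y, v y ^ 2 := by
      obtain ⟨y, hy⟩ := Function.ne_iff.mp hv0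
      exact Finset.sum_pos' (fun z _ => sq_nonneg _)
        ⟨y, Finset.mem_univ y, lt_of_le_of_ne (sq_nonneg _) (Ne.symm (pow_ne_zero 2 hy))⟩
    have hsq : lam ^ 2 ≤ ((3 / 2) * C * η ^ 2 / (1 - ρ)) ^ 2 :=
      le_of_mul_le_mul_right h1 hvpos
    have habs : |lam| ^ 2 ≤ ((3 / 2) * C * η ^ 2 / (1 - ρ)) ^ 2 := by rwa [sq_abs]
    exact (pow_le_pow_iff_left₀ (abs_nonneg _) hKnonneg two_ne_zero).mp habs
  · -- Part 2
    intro hH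
    rw [sum_eigenvalues_sq_eq_trace hH, trace_sq_eq_sum_sq hH, hRG, sum_sq_fromBlocks]
    have hρ2 : ρ ^ 2 < 1 := by nlinarith
    have hρ20 : (0:ℝ) ≤ ρ ^ 2 := sq_nonneg ρ
    have hC2 : (0:ℝ) ≤ C ^ 2 := sq_nonneg C
    have h1ρ2 : (0:ℝ) < 1 - ρ ^ 2 := by linarith
    set X : ℝ := (T : ℝ) * (C ^ 2 / (1 - ρ ^ 2)) with hX
    have hXnn : 0 ≤ X := by positivity
    have hff : ∀ τ, ∑ a, ∑ b, f τ a b ^ 2 ≤ C ^ 2 * (ρ ^ 2) ^ τ := by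
      intro τ
      refine le_trans (rowEmbed_frobenius_le n (M ^ τ) i j) ?_
      calc specNorm (M ^ τ) ^ 2 ≤ (C * ρ ^ τ) ^ 2 :=
            pow_le_pow_left₀ (specNorm_nonneg _) (hspec1 τ) 2
        _ = C ^ 2 * (ρ ^ 2) ^ τ := by ring
    have hgg : ∀ τ, ∑ a, ∑ b, g τ a b ^ 2 ≤ C ^ 2 * (ρ ^ 2) ^ τ := by
      intro τ
      refine le_trans (rowEmbed_frobenius_le n (M ^ τ * B) i j) ?_
      calc specNorm (M ^ τ * B) ^ 2 ≤ (C * ρ ^ τ) ^ 2 :=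
            pow_le_pow_left₀ (specNorm_nonneg _) (hspec2 τ) 2
        _ = C ^ 2 * (ρ ^ 2) ^ τ := by ring
    have Sf := R1_frobenius_le T T₀ f hC2 hρ20 hρ2 hff
    have Sg := R1_frobenius_le T T₀ g hC2 hρ20 hρ2 hgg
    rw [← hX] at Sf Sg
    -- bound for the top-left block
    have hswap : ∑ x, ∑ y, ((R1 T T₀ f) y x) ^ 2 = ∑ x, ∑ y, ((R1 T T₀ f) x y) ^ 2 :=
      Finset.sum_comm
    have hSP : ∑ x, ∑ y, (η ^ 2 • R1sym T T₀ f) x y ^ 2 ≤ η ^ 4 * X := by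
      have hpt : ∀ x y, (η ^ 2 • R1sym T T₀ f) x y ^ 2
          ≤ η ^ 4 * 2⁻¹ * (((R1 T T₀ f) x y) ^ 2 + ((R1 T T₀ f) y x) ^ 2) := by
        intro x y
        have hxy : (η ^ 2 • R1sym T T₀ f) x y
            = η ^ 2 * (2⁻¹ * ((R1 T T₀ f) x y + (R1 T T₀ f) y x)) := by
          simp only [R1sym, Matrix.smul_apply, Matrix.add_apply, Matrix.transpose_apply,
            smul_eq_mul]
        rw [hxy]
        nlinarith [sq_nonneg ((R1 T T₀ f) x y - (R1 T T₀ f) y x), sq_nonneg (η ^ 2),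
          sq_nonneg ((R1 T T₀ f) x y + (R1 T T₀ f) y x)]
      calc ∑ x, ∑ y, (η ^ 2 • R1sym T T₀ f) x y ^ 2
          ≤ ∑ x, ∑ y, (η ^ 4 * 2⁻¹ * (((R1 T T₀ f) x y) ^ 2 + ((R1 T T₀ f) y x) ^ 2)) :=
            Finset.sum_le_sum fun x _ => Finset.sum_le_sum fun y _ => hpt x y
        _ = η ^ 4 * 2⁻¹ * ((∑ x, ∑ y, ((R1 T T₀ f) x y) ^ 2)
            + ∑ x, ∑ y, ((R1 T T₀ f) y x) ^ 2) := by
            simp_rw [mul_add, Finset.sum_add_distrib, Finset.mul_sum]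
        _ = η ^ 4 * (∑ x, ∑ y, ((R1 T T₀ f) x y) ^ 2) := by rw [hswap]; ring
        _ ≤ η ^ 4 * X := by
            apply mul_le_mul_of_nonneg_left Sf (by positivity)
    have hSQ : ∑ x, ∑ y, ((η ^ 2 / 2) • R1 T T₀ g) x y ^ 2 ≤ (η ^ 2 / 2) ^ 2 * X := by
      have : ∀ x y, ((η ^ 2 / 2) • R1 T T₀ g) x y ^ 2
          = (η ^ 2 / 2) ^ 2 * ((R1 T T₀ g) x y) ^ 2 := by
        intro x y
        simp [Matrix.smul_apply, smul_eq_mul, mul_pow]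
      simp_rw [this, ← Finset.mul_sum]
      exact mul_le_mul_of_nonneg_left Sg (by positivity)
    have hgswap : ∑ x, ∑ y, ((R1 T T₀ g) y x) ^ 2 = ∑ x, ∑ y, ((R1 T T₀ g) x y) ^ 2 :=
      Finset.sum_comm
    have hSR : ∑ x, ∑ y, ((η ^ 2 / 2) • (R1 T T₀ g)ᵀ) x y ^ 2 ≤ (η ^ 2 / 2) ^ 2 * X := by
      have : ∀ (x : Fin (T+T₀+1) × Fin m) (y : Fin (T+T₀+1) × Fin n),
          ((η ^ 2 / 2) • (R1 T T₀ g)ᵀ) x y ^ 2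
          = (η ^ 2 / 2) ^ 2 * ((R1 T T₀ g) y x) ^ 2 := by
        intro x y
        simp [Matrix.smul_apply, Matrix.transpose_apply, smul_eq_mul, mul_pow]
      simp_rw [this, ← Finset.mul_sum]
      rw [hgswap]
      exact mul_le_mul_of_nonneg_left Sg (by positivity)
    have hkey : (3:ℝ) / 2 / (1 - ρ ^ 2) ≤ (9 / 2) / (1 - ρ) ^ 2 := by
      rw [div_le_div_iff₀ h1ρ2 (by positivity)]
      nlinarith
    calc ((∑ x, ∑ y, (η ^ 2 • R1sym T T₀ f) x y ^ 2)
          + ∑ x, ∑ y, ((η ^ 2 / 2) • R1 T T₀ g) x y ^ 2)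
          + ∑ x, ∑ y, ((η ^ 2 / 2) • (R1 T T₀ g)ᵀ) x y ^ 2
        ≤ (η ^ 4 * X + (η ^ 2 / 2) ^ 2 * X) + (η ^ 2 / 2) ^ 2 * X :=
          add_le_add (add_le_add hSP hSQ) hSR
      _ = (η ^ 4 * ((T : ℝ) * C ^ 2)) * ((3:ℝ) / 2 / (1 - ρ ^ 2)) := by
          rw [hX]; field_simp; ring
      _ ≤ (η ^ 4 * ((T : ℝ) * C ^ 2)) * ((9 / 2) / (1 - ρ) ^ 2) :=
          mul_le_mul_of_nonneg_left hkey (by positivity)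
      _ = (9 / 2) * C ^ 2 * η ^ 4 * (T : ℝ) / (1 - ρ) ^ 2 := by
          field_simp

end
end
end

section
/- Let n, m ≥ 1, A ∈ ℝ^{n×n}, B ∈ ℝ^{n×m}, K₀ ∈ ℝ^{m×n}, and let constants η > 0, σ_w, σ_v with 0 ≤ σ_w ≤ 1, 0 ≤ σ_v ≤ 1, σ_w² ≤ 5η², σ_v² ≤ 5η², C ≥ 1 and 0 ≤ ρ < 1 be such that for all integers τ ≥ 0 (spectral norm |||·|||): |||(A+BK₀)^τ||| ≤ Cρ^τ, |||(A+BK₀)^τB||| ≤ Cρ^τ, |||K₀(A+BK₀)^τ||| ≤ Cρ^τ, |||K₀(A+BK₀)^τB||| ≤ Cρ^τ. Define Q* = Σ_{τ=0}^∞ (A+BK₀)^τ(σ_w²I+σ_v²BBᵀ)((A+BK₀)ᵀ)^τ and M* = [[Q*, Q*K₀ᵀ],[K₀Q*, K₀Q*K₀ᵀ+σ_v²I]] ∈ ℝ^{(n+m)×(n+m)}. Then the spectral norm of M* satisfies |||M*||| ≤ 85·C²η²/(1−ρ). -/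
open MeasureTheory Matrix Filter
open scoped ENNReal

noncomputable section

/-- The induced `∞`-norm (maximum absolute row sum) of a real matrix. -/
def inflNorm {α β : Type*} [Fintype α] [Fintype β] (M : Matrix α β ℝ) : ℝ :=
  ⨆ i, ∑ j, |M i j|

/-- The entrywise maximum absolute value of a real matrix. -/
def entryMaxNorm {α β : Type*} [Fintype α] [Fintype β] (M : Matrix α β ℝ) : ℝ :=
  ⨆ i, ⨆ j, |M i j|

/-- The entrywise `ℓ₁` norm of a real matrix. -/
def matL1Norm {α β : Type*} [Fintype α] [Fintype β] (M : Matrix α β ℝ) : ℝ :=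
  ∑ i, ∑ j, |M i j|

/-- The squared Frobenius norm of a real matrix. -/
def frobSq {α β : Type*} [Fintype α] [Fintype β] (M : Matrix α β ℝ) : ℝ :=
  ∑ i, ∑ j, (M i j) ^ 2

/-- The `ℓ∞` norm of a real vector. -/
def vecMax {α : Type*} [Fintype α] (g : α → ℝ) : ℝ := ⨆ i, |g i|

/-- The `ℓ₁` norm of a real vector. -/
def vecL1 {α : Type*} [Fintype α] (g : α → ℝ) : ℝ := ∑ i, |g i|

/-- The squared Euclidean norm of a real vector. -/
def vecL2sq {α : Type*} [Fintype α] (g : α → ℝ) : ℝ := ∑ i, (g i) ^ 2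

/-- The principal submatrix with rows and columns in the index set `S`. -/
def subSq {r : Type*} (M : Matrix r r ℝ) (S : Finset r) : Matrix S S ℝ :=
  M.submatrix Subtype.val Subtype.val

/-- The submatrix with rows in `S` and columns in `S'`. -/
def subRC {r : Type*} (M : Matrix r r ℝ) (S S' : Finset r) : Matrix S S' ℝ :=
  M.submatrix Subtype.val Subtype.val

/-- The Lasso objective for a single column. -/
def lassoObjC {ι α : Type*} [Fintype ι] [Fintype α]
    (T : ℕ) (lam : ℝ) (X : Matrix ι α ℝ) (y : ι → ℝ) (ψ : α → ℝ) : ℝ :=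
  (2 * (T : ℝ))⁻¹ * vecL2sq (fun t => y t - (X *ᵥ ψ) t) + lam * vecL1 ψ

end

section SpecAux
open scoped Matrix.Norms.L2Operator

variable {p q r s N : Type*} [Fintype p] [Fintype q] [Fintype r] [Fintype s] [Fintype N]

lemma specNorm_eq [DecidableEq q] (M : Matrix p q ℝ) : specNorm M = ‖M‖ := rfl

lemma specNorm_nonneg_s13 [DecidableEq q] (M : Matrix p q ℝ) : 0 ≤ specNorm M := by
  rw [specNorm_eq]; exact norm_nonneg M

lemma specNorm_mul_le [DecidableEq q] [DecidableEq r] (A : Matrix p q ℝ) (B : Matrix q r ℝ) :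
    specNorm (A * B) ≤ specNorm A * specNorm B := by
  simp only [specNorm_eq]; exact Matrix.l2_opNorm_mul A B

lemma specNorm_transpose [DecidableEq p] [DecidableEq q] (A : Matrix p q ℝ) :
    specNorm Aᵀ = specNorm A := by
  simp only [specNorm_eq]
  rw [← Matrix.conjTranspose_eq_transpose_of_trivial]
  exact Matrix.l2_opNorm_conjTranspose A

lemma specNorm_add_le_s13 [DecidableEq q] (A B : Matrix p q ℝ) :
    specNorm (A + B) ≤ specNorm A + specNorm B := by
  simp only [specNorm_eq]; exact norm_add_le A B

lemma specNorm_smul [DecidableEq q] (c : ℝ) (A : Matrix p q ℝ) :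
    specNorm (c • A) = |c| * specNorm A := by
  simp only [specNorm_eq]; rw [norm_smul, Real.norm_eq_abs]

lemma specNorm_one_le [DecidableEq p] : specNorm (1 : Matrix p p ℝ) ≤ 1 := by
  have h1 : ‖(1 : Matrix p p ℝ)ᴴ * 1‖ = ‖(1 : Matrix p p ℝ)‖ * ‖(1 : Matrix p p ℝ)‖ :=
    Matrix.l2_opNorm_conjTranspose_mul_self 1
  rw [Matrix.conjTranspose_one, one_mul] at h1
  rw [specNorm_eq]
  nlinarith [norm_nonneg (1 : Matrix p p ℝ)]

lemma specNorm_le_one_of_isometry [DecidableEq q] (E : Matrix p q ℝ) (h : Eᴴ * E = 1) :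
    specNorm E ≤ 1 := by
  have h1 := Matrix.l2_opNorm_conjTranspose_mul_self E
  rw [h] at h1
  have h2 : ‖(1 : Matrix q q ℝ)‖ ≤ 1 := specNorm_one_le (p := q)
  rw [specNorm_eq]
  nlinarith [norm_nonneg E]

lemma specNorm_fromRows_one_zero [DecidableEq p] [DecidableEq q] :
    specNorm (Matrix.fromRows (1 : Matrix p p ℝ) (0 : Matrix q p ℝ)) ≤ 1 := by
  apply specNorm_le_one_of_isometry
  rw [Matrix.conjTranspose_eq_transpose_of_trivial, Matrix.transpose_fromRows,
    Matrix.fromCols_mul_fromRows]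
  simp

lemma specNorm_fromRows_zero_one [DecidableEq p] [DecidableEq q] :
    specNorm (Matrix.fromRows (0 : Matrix p q ℝ) (1 : Matrix q q ℝ)) ≤ 1 := by
  apply specNorm_le_one_of_isometry
  rw [Matrix.conjTranspose_eq_transpose_of_trivial, Matrix.transpose_fromRows,
    Matrix.fromCols_mul_fromRows]
  simp

lemma specNorm_single_block_le {t u : Type*} [Fintype t] [Fintype u]
    [DecidableEq p] [DecidableEq r] [DecidableEq u]
    (X : Matrix p r ℝ) (E : Matrix t p ℝ) (F : Matrix u r ℝ)
    (hE : specNorm E ≤ 1) (hF : specNorm F ≤ 1) :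
    specNorm (E * X * Fᵀ) ≤ specNorm X := by
  have h1 : specNorm (E * X * Fᵀ) ≤ specNorm (E * X) * specNorm Fᵀ := specNorm_mul_le _ _
  have h2 : specNorm (E * X) ≤ specNorm E * specNorm X := specNorm_mul_le _ _
  rw [specNorm_transpose] at h1
  nlinarith [specNorm_nonneg_s13 X, specNorm_nonneg_s13 (E * X), specNorm_nonneg_s13 E, specNorm_nonneg_s13 F,
    specNorm_nonneg_s13 (E * X * Fᵀ)]

lemma specNorm_fromBlocks_le_s13 [DecidableEq p] [DecidableEq q] [DecidableEq r] [DecidableEq s]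
    (A : Matrix p r ℝ) (B : Matrix p s ℝ) (C : Matrix q r ℝ) (D : Matrix q s ℝ) :
    specNorm (Matrix.fromBlocks A B C D) ≤
      specNorm A + specNorm B + specNorm C + specNorm D := by
  set E1 : Matrix (p ⊕ q) p ℝ := Matrix.fromRows 1 0 with hE1
  set E2 : Matrix (p ⊕ q) q ℝ := Matrix.fromRows 0 1 with hE2
  set F1 : Matrix (r ⊕ s) r ℝ := Matrix.fromRows 1 0 with hF1
  set F2 : Matrix (r ⊕ s) s ℝ := Matrix.fromRows 0 1 with hF2
  have hF1T : F1ᵀ = Matrix.fromCols 1 0 := by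
    rw [hF1, Matrix.transpose_fromRows]; simp
  have hF2T : F2ᵀ = Matrix.fromCols 0 1 := by
    rw [hF2, Matrix.transpose_fromRows]; simp
  have e1 : E1 * A * F1ᵀ = Matrix.fromBlocks A 0 0 0 := by
    rw [hE1, hF1T, Matrix.fromRows_mul, Matrix.fromRows_mul_fromCols]; simp
  have e2 : E1 * B * F2ᵀ = Matrix.fromBlocks 0 B 0 0 := by
    rw [hE1, hF2T, Matrix.fromRows_mul, Matrix.fromRows_mul_fromCols]; simp
  have e3 : E2 * C * F1ᵀ = Matrix.fromBlocks 0 0 C 0 := by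
    rw [hE2, hF1T, Matrix.fromRows_mul, Matrix.fromRows_mul_fromCols]; simp
  have e4 : E2 * D * F2ᵀ = Matrix.fromBlocks 0 0 0 D := by
    rw [hE2, hF2T, Matrix.fromRows_mul, Matrix.fromRows_mul_fromCols]; simp
  have hdecomp : Matrix.fromBlocks A B C D =
      E1 * A * F1ᵀ + E1 * B * F2ᵀ + E2 * C * F1ᵀ + E2 * D * F2ᵀ := by
    rw [e1, e2, e3, e4, Matrix.fromBlocks_add, Matrix.fromBlocks_add, Matrix.fromBlocks_add]
    simp
  have hA := specNorm_single_block_le A E1 F1 specNorm_fromRows_one_zero specNorm_fromRows_one_zero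
  have hB := specNorm_single_block_le B E1 F2 specNorm_fromRows_one_zero specNorm_fromRows_zero_one
  have hC := specNorm_single_block_le C E2 F1 specNorm_fromRows_zero_one specNorm_fromRows_one_zero
  have hD := specNorm_single_block_le D E2 F2 specNorm_fromRows_zero_one specNorm_fromRows_zero_one
  calc specNorm (Matrix.fromBlocks A B C D)
      = specNorm (E1 * A * F1ᵀ + E1 * B * F2ᵀ + E2 * C * F1ᵀ + E2 * D * F2ᵀ) := by rw [hdecomp]
    _ ≤ specNorm (E1 * A * F1ᵀ + E1 * B * F2ᵀ + E2 * C * F1ᵀ) + specNorm (E2 * D * F2ᵀ) :=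
        specNorm_add_le_s13 _ _
    _ ≤ specNorm (E1 * A * F1ᵀ + E1 * B * F2ᵀ) + specNorm (E2 * C * F1ᵀ)
        + specNorm (E2 * D * F2ᵀ) := by linarith [specNorm_add_le_s13 (E1 * A * F1ᵀ + E1 * B * F2ᵀ) (E2 * C * F1ᵀ)]
    _ ≤ specNorm (E1 * A * F1ᵀ) + specNorm (E1 * B * F2ᵀ) + specNorm (E2 * C * F1ᵀ)
        + specNorm (E2 * D * F2ᵀ) := by linarith [specNorm_add_le_s13 (E1 * A * F1ᵀ) (E1 * B * F2ᵀ)]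
    _ ≤ specNorm A + specNorm B + specNorm C + specNorm D := by linarith

lemma summable_of_specNorm_le [DecidableEq N] {ρ D : ℝ} (hρ0 : 0 ≤ ρ) (hρ1 : ρ < 1)
    (f : ℕ → Matrix p N ℝ) (hb : ∀ τ, specNorm (f τ) ≤ D * ρ ^ τ) : Summable f :=
  Summable.of_norm_bounded ((summable_geometric_of_lt_one hρ0 hρ1).mul_left D)
    (fun τ => by rw [← specNorm_eq]; exact hb τ)

lemma specNorm_tsum_le [DecidableEq N] {ρ D : ℝ} (hρ0 : 0 ≤ ρ) (hρ1 : ρ < 1)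
    (f : ℕ → Matrix p N ℝ) (hb : ∀ τ, specNorm (f τ) ≤ D * ρ ^ τ) :
    specNorm (∑' τ, f τ) ≤ D / (1 - ρ) := by
  have hs : Summable f := summable_of_specNorm_le hρ0 hρ1 f hb
  have hgeom : Summable (fun τ : ℕ => D * ρ ^ τ) :=
    (summable_geometric_of_lt_one hρ0 hρ1).mul_left D
  have h1 : specNorm (∑' τ, f τ) ≤ ∑' τ, specNorm (f τ) := by
    simp only [specNorm_eq]
    exact norm_tsum_le_tsum_norm hs.norm
  have h2 : ∑' τ, specNorm (f τ) ≤ ∑' τ : ℕ, D * ρ ^ τ :=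
    Summable.tsum_le_tsum hb hs.norm hgeom
  have h3 : ∑' τ : ℕ, D * ρ ^ τ = D / (1 - ρ) := by
    rw [tsum_mul_left, tsum_geometric_of_lt_one hρ0 hρ1, div_eq_mul_inv]
  linarith

lemma conj_tsum [DecidableEq N] [DecidableEq q] (f : ℕ → Matrix N N ℝ) (hs : Summable f)
    (X : Matrix p N ℝ) (Y : Matrix N q ℝ) :
    X * (∑' τ, f τ) * Y = ∑' τ, X * f τ * Y := by
  let L : Matrix N N ℝ →ₗ[ℝ] Matrix p q ℝ :=
    { toFun := fun M => X * M * Y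
      map_add' := fun M₁ M₂ => by simp [Matrix.mul_add, Matrix.add_mul]
      map_smul' := fun c M => by simp [Matrix.mul_smul, Matrix.smul_mul] }
  exact ((hs.hasSum.mapL (LinearMap.toContinuousLinearMap L)).tsum_eq).symm

end SpecAux
section TermAux

variable {p q : Type*} [Fintype p] [Fintype q]

lemma term_decomp {n m : ℕ} (σw σv : ℝ) (B : Matrix (Fin n) (Fin m) ℝ)
    (X : Matrix p (Fin n) ℝ) (Y : Matrix q (Fin n) ℝ) :
    X * (σw ^ 2 • (1 : Matrix (Fin n) (Fin n) ℝ) + σv ^ 2 • (B * Bᵀ)) * Yᵀ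
      = σw ^ 2 • (X * Yᵀ) + σv ^ 2 • ((X * B) * (Y * B)ᵀ) := by
  simp [Matrix.mul_add, Matrix.add_mul, Matrix.mul_smul, Matrix.smul_mul,
    Matrix.transpose_mul, Matrix.mul_assoc]

lemma term_bound [DecidableEq p] [DecidableEq q] {n m : ℕ} (σw σv η C ρ : ℝ)
    (B : Matrix (Fin n) (Fin m) ℝ)
    (hσw0 : 0 ≤ σw) (hσv0 : 0 ≤ σv) (hσwη : σw ^ 2 ≤ 5 * η ^ 2) (hσvη : σv ^ 2 ≤ 5 * η ^ 2)
    (hC : 1 ≤ C) (hρ0 : 0 ≤ ρ) (hρ1 : ρ < 1) (τ : ℕ)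
    (X : Matrix p (Fin n) ℝ) (Y : Matrix q (Fin n) ℝ)
    (hX : specNorm X ≤ C * ρ ^ τ) (hXB : specNorm (X * B) ≤ C * ρ ^ τ)
    (hY : specNorm Y ≤ C * ρ ^ τ) (hYB : specNorm (Y * B) ≤ C * ρ ^ τ) :
    specNorm (X * (σw ^ 2 • (1 : Matrix (Fin n) (Fin n) ℝ) + σv ^ 2 • (B * Bᵀ)) * Yᵀ)
      ≤ 10 * C ^ 2 * η ^ 2 * ρ ^ τ := by
  rw [term_decomp]
  have hρτ0 : (0:ℝ) ≤ ρ ^ τ := pow_nonneg hρ0 τ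
  have hρτ1 : ρ ^ τ ≤ 1 := pow_le_one₀ hρ0 hρ1.le
  have hCρ : (0:ℝ) ≤ C * ρ ^ τ := by positivity
  have t1 : specNorm (X * Yᵀ) ≤ (C * ρ ^ τ) * (C * ρ ^ τ) := by
    refine le_trans (specNorm_mul_le X Yᵀ) ?_
    rw [specNorm_transpose]
    exact mul_le_mul hX hY (specNorm_nonneg_s13 _) hCρ
  have t2 : specNorm ((X * B) * (Y * B)ᵀ) ≤ (C * ρ ^ τ) * (C * ρ ^ τ) := by
    refine le_trans (specNorm_mul_le (X * B) (Y * B)ᵀ) ?_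
    rw [specNorm_transpose]
    exact mul_le_mul hXB hYB (specNorm_nonneg_s13 _) hCρ
  have hρρ : ρ ^ τ * ρ ^ τ ≤ ρ ^ τ := by nlinarith
  have hCC : (0:ℝ) ≤ C * C := mul_nonneg (zero_le_one.trans hC) (zero_le_one.trans hC)
  have hsq : (C * ρ ^ τ) * (C * ρ ^ τ) ≤ C ^ 2 * ρ ^ τ := by
    calc (C * ρ ^ τ) * (C * ρ ^ τ) = C * C * (ρ ^ τ * ρ ^ τ) := by ring
      _ ≤ C * C * ρ ^ τ := mul_le_mul_of_nonneg_left hρρ hCC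
      _ = C ^ 2 * ρ ^ τ := by ring
  have hadd := specNorm_add_le_s13 (σw ^ 2 • (X * Yᵀ)) (σv ^ 2 • ((X * B) * (Y * B)ᵀ))
  rw [specNorm_smul, specNorm_smul, abs_of_nonneg (sq_nonneg σw), abs_of_nonneg (sq_nonneg σv)]
    at hadd
  have b1 : σw ^ 2 * specNorm (X * Yᵀ) ≤ 5 * η ^ 2 * (C ^ 2 * ρ ^ τ) :=
    mul_le_mul hσwη (le_trans t1 hsq) (specNorm_nonneg_s13 _) (by positivity)
  have b2 : σv ^ 2 * specNorm ((X * B) * (Y * B)ᵀ) ≤ 5 * η ^ 2 * (C ^ 2 * ρ ^ τ) :=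
    mul_le_mul hσvη (le_trans t2 hsq) (specNorm_nonneg_s13 _) (by positivity)
  nlinarith

end TermAux

/-- Bound on the spectral norm of the stationary covariance `M*`:
`|||M*||| ≤ 85 C² η²/(1−ρ)`. -/
theorem statement_13 (n m : ℕ) (hn : 1 ≤ n) (hm : 1 ≤ m)
    (A : Matrix (Fin n) (Fin n) ℝ) (B : Matrix (Fin n) (Fin m) ℝ)
    (K : Matrix (Fin m) (Fin n) ℝ)
    (η σw σv C ρ : ℝ) (hη : 0 < η)
    (hσw0 : 0 ≤ σw) (hσw1 : σw ≤ 1) (hσv0 : 0 ≤ σv) (hσv1 : σv ≤ 1)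
    (hσwη : σw ^ 2 ≤ 5 * η ^ 2) (hσvη : σv ^ 2 ≤ 5 * η ^ 2)
    (hC : 1 ≤ C) (hρ0 : 0 ≤ ρ) (hρ1 : ρ < 1)
    (hspec1 : ∀ τ : ℕ, specNorm ((A + B * K) ^ τ) ≤ C * ρ ^ τ)
    (hspec2 : ∀ τ : ℕ, specNorm ((A + B * K) ^ τ * B) ≤ C * ρ ^ τ)
    (hspec3 : ∀ τ : ℕ, specNorm (K * (A + B * K) ^ τ) ≤ C * ρ ^ τ)
    (hspec4 : ∀ τ : ℕ, specNorm (K * (A + B * K) ^ τ * B) ≤ C * ρ ^ τ)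
    (Qstar : Matrix (Fin n) (Fin n) ℝ)
    (hQ : Qstar = ∑' τ : ℕ, (A + B * K) ^ τ *
      (σw ^ 2 • (1 : Matrix (Fin n) (Fin n) ℝ) + σv ^ 2 • (B * Bᵀ)) * ((A + B * K)ᵀ) ^ τ)
    (Mstar : Matrix (Fin n ⊕ Fin m) (Fin n ⊕ Fin m) ℝ)
    (hMstar : Mstar = Matrix.fromBlocks Qstar (Qstar * Kᵀ) (K * Qstar)
      (K * Qstar * Kᵀ + σv ^ 2 • (1 : Matrix (Fin m) (Fin m) ℝ))) :
    specNorm Mstar ≤ 85 * C ^ 2 * η ^ 2 / (1 - ρ) := by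
  set P : Matrix (Fin n) (Fin n) ℝ := A + B * K with hP
  set S : Matrix (Fin n) (Fin n) ℝ := σw ^ 2 • 1 + σv ^ 2 • (B * Bᵀ) with hS
  set f : ℕ → Matrix (Fin n) (Fin n) ℝ := fun τ => P ^ τ * S * (P ^ τ)ᵀ with hf
  set D : ℝ := 10 * C ^ 2 * η ^ 2 with hD
  have h1ρ : (0:ℝ) < 1 - ρ := by linarith
  -- Qstar as a sum of f
  have hQ' : Qstar = ∑' τ, f τ := by
    rw [hQ]
    exact tsum_congr fun τ => by simp only [hf]; rw [Matrix.transpose_pow]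
  -- per-term bounds
  have hb3 : ∀ τ : ℕ, specNorm (K * P ^ τ * B) ≤ C * ρ ^ τ := hspec4
  have hbf : ∀ τ, specNorm (f τ) ≤ D * ρ ^ τ := fun τ =>
    term_bound σw σv η C ρ B hσw0 hσv0 hσwη hσvη hC hρ0 hρ1 τ (P ^ τ) (P ^ τ)
      (hspec1 τ) (hspec2 τ) (hspec1 τ) (hspec2 τ)
  have hbKf : ∀ τ, specNorm (K * f τ) ≤ D * ρ ^ τ := fun τ => by
    have : K * f τ = (K * P ^ τ) * S * (P ^ τ)ᵀ := by
      simp only [hf, Matrix.mul_assoc]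
    rw [this]
    exact term_bound σw σv η C ρ B hσw0 hσv0 hσwη hσvη hC hρ0 hρ1 τ (K * P ^ τ) (P ^ τ)
      (hspec3 τ) (hb3 τ) (hspec1 τ) (hspec2 τ)
  have hbfK : ∀ τ, specNorm (f τ * Kᵀ) ≤ D * ρ ^ τ := fun τ => by
    have : f τ * Kᵀ = P ^ τ * S * (K * P ^ τ)ᵀ := by
      simp only [hf, Matrix.transpose_mul, Matrix.mul_assoc]
    rw [this]
    exact term_bound σw σv η C ρ B hσw0 hσv0 hσwη hσvη hC hρ0 hρ1 τ (P ^ τ) (K * P ^ τ)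
      (hspec1 τ) (hspec2 τ) (hspec3 τ) (hb3 τ)
  have hbKfK : ∀ τ, specNorm (K * f τ * Kᵀ) ≤ D * ρ ^ τ := fun τ => by
    have : K * f τ * Kᵀ = (K * P ^ τ) * S * (K * P ^ τ)ᵀ := by
      simp only [hf, Matrix.transpose_mul, Matrix.mul_assoc]
    rw [this]
    exact term_bound σw σv η C ρ B hσw0 hσv0 hσwη hσvη hC hρ0 hρ1 τ (K * P ^ τ) (K * P ^ τ)
      (hspec3 τ) (hb3 τ) (hspec3 τ) (hb3 τ)
  have hsum : Summable f := summable_of_specNorm_le hρ0 hρ1 f hbf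
  -- block identities via tsum
  have hKQ : K * Qstar = ∑' τ, K * f τ := by
    rw [hQ']
    simpa [Matrix.mul_one] using conj_tsum f hsum K (1 : Matrix (Fin n) (Fin n) ℝ)
  have hQK : Qstar * Kᵀ = ∑' τ, f τ * Kᵀ := by
    rw [hQ']
    simpa [Matrix.one_mul] using conj_tsum f hsum (1 : Matrix (Fin n) (Fin n) ℝ) Kᵀ
  have hKQK : K * Qstar * Kᵀ = ∑' τ, K * f τ * Kᵀ := by
    rw [hQ']
    exact conj_tsum f hsum K Kᵀ
  -- block norm bounds
  have n11 : specNorm Qstar ≤ D / (1 - ρ) := by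
    rw [hQ']; exact specNorm_tsum_le hρ0 hρ1 f hbf
  have n12 : specNorm (Qstar * Kᵀ) ≤ D / (1 - ρ) := by
    rw [hQK]; exact specNorm_tsum_le hρ0 hρ1 _ hbfK
  have n21 : specNorm (K * Qstar) ≤ D / (1 - ρ) := by
    rw [hKQ]; exact specNorm_tsum_le hρ0 hρ1 _ hbKf
  have n22a : specNorm (K * Qstar * Kᵀ) ≤ D / (1 - ρ) := by
    rw [hKQK]; exact specNorm_tsum_le hρ0 hρ1 _ hbKfK
  have n22b : specNorm (σv ^ 2 • (1 : Matrix (Fin m) (Fin m) ℝ)) ≤ 5 * η ^ 2 := by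
    rw [specNorm_smul, abs_of_nonneg (sq_nonneg σv)]
    have h1 := specNorm_one_le (p := Fin m)
    nlinarith [sq_nonneg σv, specNorm_nonneg_s13 (1 : Matrix (Fin m) (Fin m) ℝ)]
  have n22 : specNorm (K * Qstar * Kᵀ + σv ^ 2 • (1 : Matrix (Fin m) (Fin m) ℝ))
      ≤ D / (1 - ρ) + 5 * η ^ 2 := by
    have := specNorm_add_le_s13 (K * Qstar * Kᵀ) (σv ^ 2 • (1 : Matrix (Fin m) (Fin m) ℝ))
    linarith
  -- assemble
  rw [hMstar]
  refine le_trans (specNorm_fromBlocks_le_s13 _ _ _ _) ?_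
  have h5 : 5 * η ^ 2 ≤ 45 * C ^ 2 * η ^ 2 / (1 - ρ) := by
    rw [le_div_iff₀ h1ρ]
    have hC2 : (1:ℝ) ≤ C ^ 2 := by nlinarith
    nlinarith [mul_nonneg (sq_nonneg η) hρ0, mul_le_mul_of_nonneg_right hC2 (sq_nonneg η)]
  have hDq : D / (1 - ρ) = 10 * C ^ 2 * η ^ 2 / (1 - ρ) := by rw [hD]
  have hsum85 : 10 * C ^ 2 * η ^ 2 / (1 - ρ) * 4 + 45 * C ^ 2 * η ^ 2 / (1 - ρ)
      = 85 * C ^ 2 * η ^ 2 / (1 - ρ) := by ring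
  linarith
end
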